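/- arXiv:1811.08683 — 2 statements merged into one kernel-verified Lean document; each statement's English description precedes it below -/
import Mathlib

section
/- In a solution of the dipole Poisson equation B ψ = q with source at r and sink at s, the potential ψ attains its maximum at r and its minimum at s: ψ_n ≤ ψ_r and ψ_n ≥ ψ_s for all nodes n. -/
open Matrix BigOperators

/-- The weighted Laplacian of a weight function `w` on `Fin N`. -/
def lapMat {N : ℕ} (w : Fin N → Fin N → ℝ) : Matrix (Fin N) (Fin N) ℝ :=
  fun i j => if i = j then ∑ k, w i k else - w i j

/-- Symmetric, nonnegative weights with zero diagonal. -/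
def IsWeight {N : ℕ} (w : Fin N → Fin N → ℝ) : Prop :=
  (∀ i j, w i j = w j i) ∧ (∀ i j, 0 ≤ w i j) ∧ (∀ i, w i i = 0)

/-- The simple graph whose edges are the pairs with nonzero weight. -/
def wGraph {N : ℕ} (w : Fin N → Fin N → ℝ) : SimpleGraph (Fin N) where
  Adj i j := i ≠ j ∧ (w i j ≠ 0 ∨ w j i ≠ 0)
  symm := ⟨fun i j ⟨h1, h2⟩ => ⟨h1.symm, h2.symm⟩⟩
  loopless := ⟨fun i h => h.1 rfl⟩

/-- The dipole vector `ν_rs`: `+1` at `r`, `-1` at `s`, `0` elsewhere. -/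
def dipole {N : ℕ} (r s : Fin N) : Fin N → ℝ :=
  fun i => (if i = r then (1:ℝ) else 0) - (if i = s then (1:ℝ) else 0)

/-- `Bd` is the Moore-Penrose pseudoinverse of `B` (the four Penrose axioms). -/
def IsMoorePenrose {N : ℕ} (B Bd : Matrix (Fin N) (Fin N) ℝ) : Prop :=
  B * Bd * B = B ∧ Bd * B * Bd = Bd ∧ (B * Bd)ᵀ = B * Bd ∧ (Bd * B)ᵀ = Bd * B

/-- The locality factor `η(r,s) = b_rs ν_rs^T B^† ν_rs`. -/
def eta {N : ℕ} (w : Fin N → Fin N → ℝ) (Bdag : Matrix (Fin N) (Fin N) ℝ)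
    (r s : Fin N) : ℝ :=
  w r s * (dipole r s ⬝ᵥ Bdag.mulVec (dipole r s))


lemma lap_apply {N : ℕ} (w : Fin N → Fin N → ℝ) (hdiag : ∀ i, w i i = 0)
    (ψ : Fin N → ℝ) (i : Fin N) :
    (lapMat w).mulVec ψ i = ∑ j, w i j * (ψ i - ψ j) := by
  simp only [mulVec, dotProduct, lapMat]
  have h : ∀ j ∈ Finset.univ, (if i = j then ∑ k, w i k else -w i j) * ψ j
      = (if j = i then (∑ k, w i k) * ψ i + w i j * ψ j else 0) - w i j * ψ j := by
    intro j _
    by_cases hij : i = j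
    · subst hij; simp [hdiag i]
    · rw [if_neg hij, if_neg (Ne.symm hij)]; ring
  rw [Finset.sum_congr rfl h, Finset.sum_sub_distrib, Finset.sum_ite_eq' Finset.univ i,
    if_pos (Finset.mem_univ i), hdiag i]
  have h2 : ∑ j, w i j * (ψ i - ψ j) = (∑ j, w i j) * ψ i - ∑ j, w i j * ψ j := by
    simp [mul_sub, Finset.sum_sub_distrib, Finset.sum_mul]
  rw [h2]
  ring

lemma max_at_source {N : ℕ} (w : Fin N → Fin N → ℝ) (hw : IsWeight w)
    (hconn : (wGraph w).Connected) (r : Fin N) (q ψ : Fin N → ℝ)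
    (hq : (lapMat w).mulVec ψ = q) (hle : ∀ n, n ≠ r → q n ≤ 0) :
    ∀ n, ψ n ≤ ψ r := by
  obtain ⟨hsymm, hnn, hdiag⟩ := hw
  have : Nonempty (Fin N) := ⟨r⟩
  obtain ⟨m, hm⟩ := Finite.exists_max ψ
  have key : ∀ i, ψ i = ψ m → i ≠ r → ∀ j, (wGraph w).Adj i j → ψ j = ψ m := by
    intro i hi hir j hadj
    have hsum : ∑ k, w i k * (ψ i - ψ k) = q i := by
      rw [← lap_apply w hdiag, hq]
    have hnn' : ∀ k ∈ Finset.univ, (0:ℝ) ≤ w i k * (ψ i - ψ k) := by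
      intro k _
      exact mul_nonneg (hnn i k) (by rw [hi]; linarith [hm k])
    have hzero : ∑ k, w i k * (ψ i - ψ k) = 0 :=
      le_antisymm (hsum ▸ hle i hir) (Finset.sum_nonneg hnn')
    have hz := (Finset.sum_eq_zero_iff_of_nonneg hnn').mp hzero j (Finset.mem_univ j)
    have hwij : w i j ≠ 0 := by
      rcases hadj.2 with h | h
      · exact h
      · rw [hsymm]; exact h
    have hdiff : ψ i - ψ j = 0 := by
      rcases mul_eq_zero.mp hz with h | h
      · exact absurd h hwij
      · exact h
    linarith
  have hwalk : ∀ i j (p : (wGraph w).Walk i j),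
      (∀ k, ψ k = ψ m → k ≠ j → ∀ l, (wGraph w).Adj k l → ψ l = ψ m) →
      ψ i = ψ m → ψ j = ψ m := by
    intro i j p
    induction p with
    | nil => exact fun _ h => h
    | @cons u v t h p ih =>
      intro hkey hu
      by_cases hut : u = t
      · rw [← hut]; exact hu
      · exact ih hkey (hkey u hu hut v h)
  have hr : ψ r = ψ m := by
    obtain ⟨p⟩ := hconn.preconnected m r
    exact hwalk m r p key rfl
  intro n
  rw [hr]
  exact hm n

theorem potential_extremal_at_source_and_sink {N : ℕ} (w : Fin N → Fin N → ℝ)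
    (hw : IsWeight w) (hconn : (wGraph w).Connected)
    (r s : Fin N) (q ψ : Fin N → ℝ)
    (hq : (lapMat w).mulVec ψ = q)
    (hqr : 0 < q r) (hqs : q s = - q r) (hq0 : ∀ n, n ≠ r → n ≠ s → q n = 0) :
    ∀ n, ψ n ≤ ψ r ∧ ψ s ≤ ψ n := by
  intro n
  constructor
  · refine max_at_source w hw hconn r q ψ hq ?_ n
    intro k hk
    by_cases hks : k = s
    · subst hks; rw [hqs]; linarith
    · rw [hq0 k hk hks]
  · have hneg : (lapMat w).mulVec (-ψ) = -q := by
      rw [mulVec_neg, hq]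
    have := max_at_source w hw hconn s (-q) (-ψ) hneg ?_ n
    · simpa using this
    · intro k hk
      by_cases hkr : k = r
      · subst hkr; simp; linarith
      · rw [Pi.neg_apply, hq0 k hkr hk]; simp
end

section
/- Equivalence of the two LODF formulas: for a connected graph that remains connected after removing edge (r,s), the flow change on edge (m,n) given by b_{mn} ν_mn^T (B + ΔB)^† ν_rs F_rs, with ΔB = -b_rs ν_rs ν_rs^T the Laplacian perturbation removing edge (r,s), equals b_{mn} ν_mn^T B^† ν_rs F_rs / (1 - b_rs ν_rs^T B^† ν_rs). -/
open Matrix BigOperators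

/-- The weights after removal of the edge `(r,s)`. -/
def removeEdge {N : ℕ} (w : Fin N → Fin N → ℝ) (r s : Fin N) :
    Fin N → Fin N → ℝ :=
  fun i j => if (i = r ∧ j = s) ∨ (i = s ∧ j = r) then 0 else w i j

section Auxiliary

variable {N : ℕ}

/-- Uniqueness of the Moore-Penrose pseudoinverse. -/
lemma mp_unique (A C D : Matrix (Fin N) (Fin N) ℝ)
    (hC : IsMoorePenrose A C) (hD : IsMoorePenrose A D) : C = D := by
  obtain ⟨hC1, hC2, hC3, hC4⟩ := hC
  obtain ⟨hD1, hD2, hD3, hD4⟩ := hD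
  have hAC : A * C = A * D := by
    calc A * C = (A * C)ᵀ := hC3.symm
    _ = (A * D * A * C)ᵀ := by rw [hD1]
    _ = ((A * D) * (A * C))ᵀ := by rw [Matrix.mul_assoc (A*D) A C]
    _ = (A * C)ᵀ * (A * D)ᵀ := Matrix.transpose_mul _ _
    _ = A * C * (A * D) := by rw [hC3, hD3]
    _ = A * D := by rw [← Matrix.mul_assoc, hC1]
  have hCA : C * A = D * A := by
    calc C * A = (C * A)ᵀ := hC4.symm
    _ = (C * (A * D * A))ᵀ := by rw [hD1]
    _ = ((C * A) * (D * A))ᵀ := by rw [show C * (A * D * A) = (C * A) * (D * A) by noncomm_ring]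
    _ = (D * A)ᵀ * (C * A)ᵀ := Matrix.transpose_mul _ _
    _ = D * A * (C * A) := by rw [hC4, hD4]
    _ = D * (A * C * A) := by noncomm_ring
    _ = D * A := by rw [hC1]
  calc C = C * A * C := hC2.symm
  _ = D * A * C := by rw [hCA]
  _ = D * (A * C) := by rw [Matrix.mul_assoc]
  _ = D * (A * D) := by rw [hAC]
  _ = D := by rw [← Matrix.mul_assoc, hD2]

lemma lapMat_transpose (w : Fin N → Fin N → ℝ) (hw : IsWeight w) :
    (lapMat w)ᵀ = lapMat w := by
  ext i j
  by_cases h : i = j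
  · subst h; rfl
  · simp [lapMat, Matrix.transpose_apply, h, Ne.symm h, hw.1 i j]

/-- The pseudoinverse of a symmetric matrix is symmetric. -/
lemma mp_symm (A C : Matrix (Fin N) (Fin N) ℝ) (hA : Aᵀ = A)
    (hC : IsMoorePenrose A C) : Cᵀ = C := by
  obtain ⟨h1, h2, h3, h4⟩ := hC
  refine mp_unique A Cᵀ C ⟨?_, ?_, ?_, ?_⟩ ⟨h1, h2, h3, h4⟩
  · have h := congrArg Matrix.transpose h1
    rw [Matrix.transpose_mul, Matrix.transpose_mul, hA] at h
    rw [Matrix.mul_assoc]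
    exact h
  · have h := congrArg Matrix.transpose h2
    rw [Matrix.transpose_mul, Matrix.transpose_mul, hA] at h
    rw [Matrix.mul_assoc]
    exact h
  · have hACt : A * Cᵀ = (C * A)ᵀ := by rw [Matrix.transpose_mul, hA]
    rw [hACt, Matrix.transpose_transpose, h4]
  · have hCtA : Cᵀ * A = (A * C)ᵀ := by rw [Matrix.transpose_mul, hA]
    rw [hCtA, Matrix.transpose_transpose, h3]

lemma quad_form (w : Fin N → Fin N → ℝ) (hw : IsWeight w) (x : Fin N → ℝ) :
    2 * (x ⬝ᵥ (lapMat w) *ᵥ x) = ∑ i, ∑ j, w i j * (x i - x j)^2 := by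
  have hentry : ∀ i j, lapMat w i j = (if i = j then ∑ k, w i k else 0) - w i j := by
    intro i j
    by_cases h : i = j
    · subst h; simp [lapMat, hw.2.2 i]
    · simp [lapMat, h]
  have expand : x ⬝ᵥ (lapMat w) *ᵥ x
      = ∑ i, ∑ j, (w i j * x i^2 - w i j * (x i * x j)) := by
    unfold Matrix.mulVec dotProduct
    rw [Finset.sum_congr rfl]
    intro i _
    rw [Finset.mul_sum]
    simp only [hentry, sub_mul, mul_sub]
    rw [Finset.sum_sub_distrib]
    have hdiag : (∑ j, x i * ((if i = j then ∑ k, w i k else 0) * x j))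
        = ∑ j, w i j * x i^2 := by
      simp only [ite_mul, mul_ite, zero_mul, mul_zero]
      rw [Finset.sum_ite_eq Finset.univ i (fun j => x i * ((∑ k, w i k) * x j))]
      simp only [Finset.mem_univ, if_pos]
      rw [show x i * ((∑ k, w i k) * x i) = (∑ k, w i k) * (x i * x i) by ring,
        Finset.sum_mul]
      exact Finset.sum_congr rfl (fun k _ => by ring)
    rw [hdiag, ← Finset.sum_sub_distrib]
    exact Finset.sum_congr rfl (fun j _ => by ring)
  have h2 : ∑ i, ∑ j, (w i j * x j^2 - w i j * (x i * x j))
      = ∑ i, ∑ j, (w i j * x i^2 - w i j * (x i * x j)) := by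
    rw [Finset.sum_comm]
    congr 1; ext i; congr 1; ext j
    rw [hw.1 j i]; ring
  have h1 : ∑ i, ∑ j, w i j * (x i - x j)^2
      = ∑ i, ∑ j, ((w i j * x i^2 - w i j * (x i * x j))
          + (w i j * x j^2 - w i j * (x i * x j))) := by
    congr 1; ext i; congr 1; ext j; ring
  rw [h1]
  simp only [Finset.sum_add_distrib]
  rw [h2, expand]; ring

lemma ker_const (w : Fin N → Fin N → ℝ) (hw : IsWeight w)
    (hconn : (wGraph w).Connected) (x : Fin N → ℝ)
    (hx : (lapMat w) *ᵥ x = 0) : ∀ i j, x i = x j := by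
  have hq : ∑ i, ∑ j, w i j * (x i - x j)^2 = 0 := by
    rw [← quad_form w hw x, hx]
    simp
  have hterm : ∀ i j, w i j * (x i - x j)^2 = 0 := by
    have h1 := (Finset.sum_eq_zero_iff_of_nonneg (fun i _ =>
      Finset.sum_nonneg (fun j _ =>
        mul_nonneg (hw.2.1 i j) (sq_nonneg _)))).1 hq
    intro i j
    have h2 := (Finset.sum_eq_zero_iff_of_nonneg (fun j _ =>
      mul_nonneg (hw.2.1 i j) (sq_nonneg _))).1 (h1 i (Finset.mem_univ i))
    exact h2 j (Finset.mem_univ j)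
  have hadj : ∀ i j, (wGraph w).Adj i j → x i = x j := by
    intro i j hij
    have hwij : w i j ≠ 0 := by
      rcases (show i ≠ j ∧ (w i j ≠ 0 ∨ w j i ≠ 0) from hij).2 with h | h
      · exact h
      · rw [hw.1 i j]; exact h
    have := hterm i j
    rcases mul_eq_zero.1 this with h | h
    · exact absurd h hwij
    · have := pow_eq_zero_iff (n := 2) (by norm_num) |>.1 h
      linarith [this]
  intro i j
  obtain ⟨p⟩ := hconn.preconnected i j
  induction p with
  | nil => rfl
  | cons h p ih => exact (hadj _ _ h).trans ih

lemma proj_fix (w : Fin N → Fin N → ℝ) (hw : IsWeight w)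
    (hconn : (wGraph w).Connected) (Bdag : Matrix (Fin N) (Fin N) ℝ)
    (hB : IsMoorePenrose (lapMat w) Bdag)
    (v : Fin N → ℝ) (hv : ∑ i, v i = 0) :
    (Bdag * (lapMat w)) *ᵥ v = v := by
  obtain ⟨hB1, hB2, hB3, hB4⟩ := hB
  set B := lapMat w with hBdef
  set Q := Bdag * B with hQ
  have hQQ : Q * Q = Q := by
    rw [hQ, show Bdag * B * (Bdag * B) = Bdag * B * Bdag * B by noncomm_ring, hB2]
  set u : Fin N → ℝ := v - Q *ᵥ v with hu
  have hBu : B *ᵥ u = 0 := by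
    rw [hu, Matrix.mulVec_sub, Matrix.mulVec_mulVec]
    rw [show B * Q = B by rw [hQ, ← Matrix.mul_assoc]; exact hB1]
    simp
  have hQu : Q *ᵥ u = 0 := by
    rw [hu, Matrix.mulVec_sub, Matrix.mulVec_mulVec, hQQ]
    simp
  have hconst : ∀ i j, u i = u j := ker_const w hw hconn u hBu
  have hvu : v ⬝ᵥ u = 0 := by
    have : Nonempty (Fin N) := hconn.nonempty
    obtain ⟨i0⟩ := this
    have heq : v ⬝ᵥ u = (∑ i, v i) * u i0 := by
      rw [dotProduct, Finset.sum_mul]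
      exact Finset.sum_congr rfl (fun i _ => by rw [hconst i i0])
    rw [heq, hv, zero_mul]
  have huu : u ⬝ᵥ u = 0 := by
    have h1 : (Q *ᵥ v) ⬝ᵥ u = 0 := by
      rw [dotProduct_comm, Matrix.dotProduct_mulVec,
        ← Matrix.mulVec_transpose, hB4, hQu, zero_dotProduct]
    calc u ⬝ᵥ u = v ⬝ᵥ u - (Q *ᵥ v) ⬝ᵥ u := by
          rw [hu, sub_dotProduct]
    _ = 0 := by rw [hvu, h1]; ring
  have hzero : ∀ i, u i = 0 := by
    intro i
    have h1 := (Finset.sum_eq_zero_iff_of_nonneg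
      (fun i _ => mul_self_nonneg (u i))).1 huu i (Finset.mem_univ i)
    exact mul_self_eq_zero.1 h1
  funext i
  have := hzero i
  simp only [hu, Pi.sub_apply] at this
  linarith

lemma mul_vecMulVec (A : Matrix (Fin N) (Fin N) ℝ) (u v : Fin N → ℝ) :
    A * vecMulVec u v = vecMulVec (A *ᵥ u) v := by
  ext i j
  simp only [Matrix.mul_apply, vecMulVec_apply, Matrix.mulVec, dotProduct,
    Finset.sum_mul]
  exact Finset.sum_congr rfl (fun k _ => by ring)

lemma vecMulVec_mul (u v : Fin N → ℝ) (A : Matrix (Fin N) (Fin N) ℝ) :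
    vecMulVec u v * A = vecMulVec u (v ᵥ* A) := by
  ext i j
  simp only [Matrix.mul_apply, vecMulVec_apply, Matrix.vecMul, dotProduct,
    Finset.mul_sum]
  exact Finset.sum_congr rfl (fun k _ => by ring)

lemma vecMulVec_mulVec (u v x : Fin N → ℝ) :
    vecMulVec u v *ᵥ x = (v ⬝ᵥ x) • u := by
  funext i
  simp only [Matrix.mulVec, dotProduct, vecMulVec_apply, Pi.smul_apply,
    smul_eq_mul, Finset.sum_mul, Finset.mul_sum]
  exact Finset.sum_congr rfl (fun k _ => by ring)

lemma vecMulVec_transpose' (u v : Fin N → ℝ) :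
    (vecMulVec u v)ᵀ = vecMulVec v u := by
  ext i j
  simp [vecMulVec_apply, mul_comm]

lemma vecMulVec_smul_right (u : Fin N → ℝ) (a : ℝ) (v : Fin N → ℝ) :
    vecMulVec u (a • v) = a • vecMulVec u v := by
  ext i j
  simp [vecMulVec_apply]
  ring

lemma lap_remove (w : Fin N → Fin N → ℝ) (hw : IsWeight w) (r s : Fin N)
    (hrs : r ≠ s) :
    lapMat (removeEdge w r s)
      = lapMat w - (w r s) • vecMulVec (dipole r s) (dipole r s) := by
  have hsym : w s r = w r s := (hw.1 s r)
  ext i j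
  simp only [Matrix.sub_apply, Matrix.smul_apply, vecMulVec_apply, smul_eq_mul, lapMat]
  by_cases hij : i = j
  · subst hij
    simp only [if_pos rfl]
    by_cases hir : i = r
    · subst hir
      have hterm : ∀ k, removeEdge w i s i k = w i k - (if k = s then w i s else 0) := by
        intro k
        by_cases hks : k = s
        · subst hks; simp [removeEdge, hrs]
        · simp [removeEdge, hks, fun h : i = s => hrs h]
      rw [Finset.sum_congr rfl (fun k _ => hterm k), Finset.sum_sub_distrib]
      simp [Finset.sum_ite_eq', dipole, hrs]
    · by_cases his : i = s
      · subst his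
        have hterm : ∀ k, removeEdge w r i i k = w i k - (if k = r then w i r else 0) := by
          intro k
          by_cases hkr : k = r
          · subst hkr; simp [removeEdge, hir]
          · simp [removeEdge, hkr, hir]
        rw [Finset.sum_congr rfl (fun k _ => hterm k), Finset.sum_sub_distrib]
        simp [Finset.sum_ite_eq', dipole, hir, hsym]
      · have hterm : ∀ k, removeEdge w r s i k = w i k := by
          intro k; simp [removeEdge, hir, his]
        rw [Finset.sum_congr rfl (fun k _ => hterm k)]
        simp [dipole, hir, his]
  · simp only [if_neg hij]
    by_cases hir : i = r <;> by_cases his : i = s <;>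
      by_cases hjr : j = r <;> by_cases hjs : j = s <;>
      simp_all [removeEdge, dipole]

lemma dipole_sum (r s : Fin N) : ∑ i, dipole r s i = 0 := by
  simp [dipole, Finset.sum_sub_distrib, Finset.sum_ite_eq', Finset.sum_ite_eq]

lemma removeEdge_isWeight (w : Fin N → Fin N → ℝ) (hw : IsWeight w) (r s : Fin N) :
    IsWeight (removeEdge w r s) := by
  refine ⟨fun i j => ?_, fun i j => ?_, fun i => ?_⟩
  · unfold removeEdge
    by_cases h : (i = r ∧ j = s) ∨ (i = s ∧ j = r)
    · rw [if_pos h, if_pos (by tauto)]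
    · rw [if_neg h, if_neg (by tauto), hw.1]
  · unfold removeEdge
    split
    · exact le_rfl
    · exact hw.2.1 i j
  · unfold removeEdge
    split
    · rfl
    · exact hw.2.2 i

end Auxiliary

theorem lodf_formulas_equivalent {N : ℕ} (w : Fin N → Fin N → ℝ)
    (hw : IsWeight w) (hconn : (wGraph w).Connected)
    (r s m n : Fin N) (hedge : 0 < w r s)
    (hconn' : (wGraph (removeEdge w r s)).Connected)
    (Bdag Bhatdag : Matrix (Fin N) (Fin N) ℝ)
    (hB : IsMoorePenrose (lapMat w) Bdag)
    (hBhat : IsMoorePenrose (lapMat (removeEdge w r s)) Bhatdag)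
    (Frs : ℝ) :
    w m n * (dipole m n ⬝ᵥ Bhatdag.mulVec (dipole r s)) * Frs =
      w m n * (dipole m n ⬝ᵥ Bdag.mulVec (dipole r s)) * Frs /
        (1 - w r s * (dipole r s ⬝ᵥ Bdag.mulVec (dipole r s))) := by
  have hrs : r ≠ s := by
    intro h
    rw [h, hw.2.2 s] at hedge
    exact lt_irrefl 0 hedge
  set B := lapMat w with hBdef
  set ν := dipole r s with hν
  set b := w r s with hb
  obtain ⟨hB1, hB2, hB3, hB4⟩ := hB
  have hBsym : Bᵀ = B := lapMat_transpose w hw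
  have hBdsym : Bdagᵀ = Bdag := mp_symm B Bdag hBsym ⟨hB1, hB2, hB3, hB4⟩
  have hPQ : B * Bdag = Bdag * B := by
    rw [← hB4, Matrix.transpose_mul, hBsym, hBdsym]
  set u := Bdag *ᵥ ν with hu
  have hQν : (Bdag * B) *ᵥ ν = ν :=
    proj_fix w hw hconn Bdag ⟨hB1, hB2, hB3, hB4⟩ ν (dipole_sum r s)
  have hBu : B *ᵥ u = ν := by
    rw [hu, Matrix.mulVec_mulVec, hPQ, hQν]
  set a := ν ⬝ᵥ u with ha
  set M := vecMulVec ν ν with hM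
  set U := vecMulVec u u with hU
  have hrm : lapMat (removeEdge w r s) = B - b • M := lap_remove w hw r s hrs
  have hνBdag : ν ᵥ* Bdag = u := by rw [← Matrix.mulVec_transpose, hBdsym]
  have huB : u ᵥ* B = ν := by rw [← Matrix.mulVec_transpose, hBsym, hBu]
  have hνsum : ∑ i, ν i = 0 := dipole_sum r s
  have hden : 1 - b * a ≠ 0 := by
    intro hzero
    have hBh_u : lapMat (removeEdge w r s) *ᵥ u = (1 - b * a) • ν := by
      rw [hrm, Matrix.sub_mulVec, hBu, Matrix.smul_mulVec, hM,
        vecMulVec_mulVec, ← ha, smul_smul, sub_smul, one_smul]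
    rw [hzero, zero_smul] at hBh_u
    have hconst := ker_const (removeEdge w r s) (removeEdge_isWeight w hw r s)
      hconn' u hBh_u
    have hne : Nonempty (Fin N) := hconn.nonempty
    obtain ⟨i0⟩ := hne
    have haz : a = 0 := by
      rw [ha, dotProduct,
        Finset.sum_congr rfl (fun i _ => by rw [hconst i i0]),
        ← Finset.sum_mul, hνsum, zero_mul]
    rw [haz, mul_zero, sub_zero] at hzero
    exact one_ne_zero hzero
  set κ := b / (1 - b * a) with hκ
  have hκden : κ * (1 - b * a) = b := div_mul_cancel₀ b hden
  clear_value b a κ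
  set C := Bdag + κ • U with hC
  set V := vecMulVec ν u with hV
  set V' := vecMulVec u ν with hV'
  have hBU : B * U = V := by rw [hU, _root_.mul_vecMulVec, hBu]
  have hMBdag : M * Bdag = V := by rw [hM, _root_.vecMulVec_mul, hνBdag]
  have hMU : M * U = a • V := by
    rw [hM, hU, _root_.vecMulVec_mul, ← Matrix.mulVec_transpose, vecMulVec_transpose',
      vecMulVec_mulVec, dotProduct_comm, ← ha, vecMulVec_smul_right]
  have hUB : U * B = V' := by rw [hU, _root_.vecMulVec_mul, huB]
  have hBdagM : Bdag * M = V' := by rw [hM, _root_.mul_vecMulVec, ← hu]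
  have hUM : U * M = a • V' := by
    rw [hU, hM, _root_.vecMulVec_mul, ← Matrix.mulVec_transpose, vecMulVec_transpose',
      vecMulVec_mulVec, ← ha, vecMulVec_smul_right]
  set P := Bdag * B with hP
  have hcoef : κ - (b + b * κ * a) = 0 := by linear_combination hκden
  have hBhC : (B - b • M) * C = P := by
    rw [hC]
    simp only [Matrix.sub_mul, Matrix.mul_add, Matrix.smul_mul, Matrix.mul_smul,
      smul_smul]
    rw [hBU, hMBdag, hMU, hPQ]
    match_scalars <;> first | ring1 | linear_combination hκden
  have hCBh : C * (B - b • M) = P := by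
    rw [hC]
    simp only [Matrix.mul_sub, Matrix.add_mul, Matrix.smul_mul, Matrix.mul_smul,
      smul_smul]
    rw [hUB, hBdagM, hUM, ← hP]
    match_scalars <;> first | ring1 | linear_combination hκden
  have hPB : P * B = B := by rw [← hPQ]; exact hB1
  have hPM : P * M = M := by rw [hP, hM, _root_.mul_vecMulVec, hQν]
  have hPu : P *ᵥ u = u := by
    rw [hu, Matrix.mulVec_mulVec, hB2]
  have hPU : P * U = U := by rw [hU, _root_.mul_vecMulVec, hPu]
  have hPBdag : P * Bdag = Bdag := by rw [hP, hB2]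
  have hMP : IsMoorePenrose (lapMat (removeEdge w r s)) C := by
    rw [hrm]
    refine ⟨?_, ?_, ?_, ?_⟩
    · rw [hBhC, Matrix.mul_sub, Matrix.mul_smul, hPB, hPM]
    · rw [Matrix.mul_assoc, ← Matrix.mul_assoc C, hCBh, hC, Matrix.mul_add,
        Matrix.mul_smul, hPBdag, hPU]
    · rw [hBhC, hP, hB4]
    · rw [hCBh, hP, hB4]
  have hfinal : Bhatdag = C :=
    mp_unique (lapMat (removeEdge w r s)) Bhatdag C hBhat hMP
  rw [hfinal]
  have hCν : C *ᵥ ν = u + (κ * a) • u := by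
    rw [hC, Matrix.add_mulVec, Matrix.smul_mulVec, hU, vecMulVec_mulVec,
      dotProduct_comm, ← ha, smul_smul, ← hu]
  show w m n * (dipole m n ⬝ᵥ C *ᵥ ν) * Frs = _
  rw [hCν, dotProduct_add, dotProduct_smul, smul_eq_mul]
  set t := dipole m n ⬝ᵥ u with ht
  rw [eq_div_iff hden]
  linear_combination (w m n * Frs * a * t) * hκden
end
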